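/- Let A be an abelian group, let U ≤ G×H and V ≤ H×K be subgroups, and let φ : U → A and ψ : V → A be group homomorphisms such that φ(1,h)⁻¹ = ψ(h,1) for every h ∈ H with (1,h) ∈ U and (h,1) ∈ V. Then there exists a unique group homomorphism Φ : U∗V → A such that Φ(g,k) = φ(g,h)·ψ(h,k) whenever (g,h) ∈ U and (h,k) ∈ V. -/
import Mathlib


variable {G H K L A : Type*}

/-- The star product `U∗V = {(g,k) | ∃ h, (g,h) ∈ U ∧ (h,k) ∈ V}` of subgroups of
direct products. -/
def starSub [Group G] [Group H] [Group K]
    (U : Subgroup (G × H)) (V : Subgroup (H × K)) : Subgroup (G × K) where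
  carrier := {p : G × K | ∃ h : H, (p.1, h) ∈ U ∧ (h, p.2) ∈ V}
  one_mem' := ⟨1, U.one_mem, V.one_mem⟩
  mul_mem' := by
    rintro ⟨g1, k1⟩ ⟨g2, k2⟩ ⟨h1, hu1, hv1⟩ ⟨h2, hu2, hv2⟩
    exact ⟨h1 * h2, U.mul_mem hu1 hu2, V.mul_mem hv1 hv2⟩
  inv_mem' := by
    rintro ⟨g, k⟩ ⟨h, hu, hv⟩
    exact ⟨h⁻¹, U.inv_mem hu, V.inv_mem hv⟩

/-- If `φ : U → A` and `ψ : V → A` satisfy the compatibility condition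
`φ(1,h)⁻¹ = ψ(h,1)` whenever `(1,h) ∈ U` and `(h,1) ∈ V`, then there is a unique group
homomorphism `Φ : U∗V → A` with `Φ(g,k) = φ(g,h)·ψ(h,k)` whenever `(g,h) ∈ U` and
`(h,k) ∈ V`. -/
theorem star_hom_exists_unique [Group G] [Group H] [Group K] [CommGroup A]
    (U : Subgroup (G × H)) (V : Subgroup (H × K)) (φ : U →* A) (ψ : V →* A)
    (hcompat : ∀ (h : H) (hU : ((1 : G), h) ∈ U) (hV : (h, (1 : K)) ∈ V),
      (φ ⟨((1 : G), h), hU⟩)⁻¹ = ψ ⟨(h, (1 : K)), hV⟩) :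
    ∃! Φ : starSub U V →* A,
      ∀ (g : G) (h : H) (k : K) (hU : (g, h) ∈ U) (hV : (h, k) ∈ V),
        Φ ⟨(g, k), ⟨h, hU, hV⟩⟩ = φ ⟨(g, h), hU⟩ * ψ ⟨(h, k), hV⟩ := by
  classical
  have wd : ∀ (g : G) (k : K) (h1 h2 : H) (hU1 : (g, h1) ∈ U) (hV1 : (h1, k) ∈ V)
      (hU2 : (g, h2) ∈ U) (hV2 : (h2, k) ∈ V),
      φ ⟨(g, h1), hU1⟩ * ψ ⟨(h1, k), hV1⟩ = φ ⟨(g, h2), hU2⟩ * ψ ⟨(h2, k), hV2⟩ := by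
    intro g k h1 h2 hU1 hV1 hU2 hV2
    have hUd : ((1 : G), h1⁻¹ * h2) ∈ U := by
      have := U.mul_mem (U.inv_mem hU1) hU2
      simpa using this
    have hVd : (h1⁻¹ * h2, (1 : K)) ∈ V := by
      have := V.mul_mem (V.inv_mem hV1) hV2
      simpa using this
    have key : (⟨(g, h1), hU1⟩ : U) * ⟨((1 : G), h1⁻¹ * h2), hUd⟩ = ⟨(g, h2), hU2⟩ := by
      apply Subtype.ext
      show ((g, h1) : G × H) * (1, h1⁻¹ * h2) = (g, h2)
      simp [Prod.ext_iff]
    have key' : (⟨(h1, k), hV1⟩ : V) * ⟨(h1⁻¹ * h2, (1 : K)), hVd⟩ = ⟨(h2, k), hV2⟩ := by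
      apply Subtype.ext
      show ((h1, k) : H × K) * (h1⁻¹ * h2, (1 : K)) = (h2, k)
      simp [Prod.ext_iff]
    have h2eq : φ ⟨(g, h2), hU2⟩ = φ ⟨(g, h1), hU1⟩ * φ ⟨((1 : G), h1⁻¹ * h2), hUd⟩ := by
      rw [← map_mul, key]
    have h2eq' : ψ ⟨(h2, k), hV2⟩ = ψ ⟨(h1, k), hV1⟩ * ψ ⟨(h1⁻¹ * h2, (1 : K)), hVd⟩ := by
      rw [← map_mul, key']
    rw [h2eq, h2eq', ← hcompat _ hUd hVd, mul_mul_mul_comm]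
    simp
  choose hfun hfunU hfunV using fun x : starSub U V => x.2
  let f : starSub U V → A := fun x =>
    φ ⟨(x.1.1, hfun x), hfunU x⟩ * ψ ⟨(hfun x, x.1.2), hfunV x⟩
  have fspec : ∀ (g : G) (h : H) (k : K) (hU : (g, h) ∈ U) (hV : (h, k) ∈ V),
      f ⟨(g, k), ⟨h, hU, hV⟩⟩ = φ ⟨(g, h), hU⟩ * ψ ⟨(h, k), hV⟩ := by
    intro g h k hU hV
    exact wd g k _ h (hfunU ⟨(g, k), ⟨h, hU, hV⟩⟩) (hfunV ⟨(g, k), ⟨h, hU, hV⟩⟩) hU hV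
  have fmul : ∀ x y : starSub U V, f (x * y) = f x * f y := by
    rintro ⟨⟨g1, k1⟩, hx⟩ ⟨⟨g2, k2⟩, hy⟩
    obtain ⟨h1, hU1, hV1⟩ := hx
    obtain ⟨h2, hU2, hV2⟩ := hy
    have hm : ((g1 * g2, h1 * h2) : G × H) ∈ U := U.mul_mem hU1 hU2
    have hm' : ((h1 * h2, k1 * k2) : H × K) ∈ V := V.mul_mem hV1 hV2
    have heq : (⟨⟨g1, k1⟩, ⟨h1, hU1, hV1⟩⟩ * ⟨⟨g2, k2⟩, ⟨h2, hU2, hV2⟩⟩ : starSub U V)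
        = ⟨⟨g1 * g2, k1 * k2⟩, ⟨h1 * h2, hm, hm'⟩⟩ := rfl
    rw [heq, fspec _ _ _ hm hm', fspec _ h1 _ hU1 hV1, fspec _ h2 _ hU2 hV2]
    have e1 : φ ⟨(g1 * g2, h1 * h2), hm⟩ = φ ⟨(g1, h1), hU1⟩ * φ ⟨(g2, h2), hU2⟩ := by
      rw [← map_mul]; rfl
    have e2 : ψ ⟨(h1 * h2, k1 * k2), hm'⟩ = ψ ⟨(h1, k1), hV1⟩ * ψ ⟨(h2, k2), hV2⟩ := by
      rw [← map_mul]; rfl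
    rw [e1, e2]
    exact mul_mul_mul_comm _ _ _ _
  refine ⟨{ toFun := f, map_one' := ?_, map_mul' := fmul }, fspec, ?_⟩
  · have e := fspec 1 1 1 U.one_mem V.one_mem
    have e1 : (⟨((1 : G), (1 : H)), U.one_mem⟩ : U) = 1 := rfl
    have e2 : (⟨((1 : H), (1 : K)), V.one_mem⟩ : V) = 1 := rfl
    rw [e1, e2, map_one, map_one, one_mul] at e
    exact e
  · intro Φ' hΦ'
    ext x
    obtain ⟨⟨g, k⟩, h, hU, hV⟩ := x
    simp only [MonoidHom.coe_mk, OneHom.coe_mk]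
    rw [hΦ' g h k hU hV, fspec g h k hU hV]
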